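/- Operator difference bound: with K_TSVD = U_k Σ_k V_k^T = K V_k V_k^T and K̂_TSVD = Û_k Σ̂_t V̂_k^T = K V̂_k V̂_k^T − Û_0 Ŵ_21 V̂_k^T (in the setting of the block factorization above), one has ‖K_TSVD − K̂_TSVD‖₂ ≤ ‖K‖₂ · ‖V_k^T V̂_0‖₂ + ‖Ŵ_21‖₂. -/

import Mathlib

open Matrix
open scoped Matrix.Norms.L2Operator RealInnerProductSpace

namespace Stmt10Aux

noncomputable def emb {n : ℕ} (v : Fin n → ℝ) : EuclideanSpace ℝ (Fin n) :=
  (WithLp.equiv 2 (Fin n → ℝ)).symm v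

lemma inner_emb {n : ℕ} (u v : Fin n → ℝ) : ⟪emb u, emb v⟫ = u ⬝ᵥ v := by
  simp [emb, PiLp.inner_apply, RCLike.inner_apply, dotProduct, mul_comm]

lemma emb_smul {n : ℕ} (c : ℝ) (v : Fin n → ℝ) : emb (c • v) = c • emb v := rfl

lemma emb_sub {n : ℕ} (u v : Fin n → ℝ) : emb (u - v) = emb u - emb v := rfl

lemma opNorm_le_of_forall {m n : ℕ} (M : Matrix (Fin m) (Fin n) ℝ) {c : ℝ} (hc : 0 ≤ c)
    (h : ∀ x : Fin n → ℝ, ‖emb (M *ᵥ x)‖ ≤ c * ‖emb x‖) : ‖M‖ ≤ c := by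
  rw [Matrix.l2_opNorm_def]
  refine ContinuousLinearMap.opNorm_le_bound _ hc fun x => ?_
  exact h ((WithLp.equiv 2 (Fin n → ℝ)) x)

lemma norm_mulVec_le {m n : ℕ} (M : Matrix (Fin m) (Fin n) ℝ) (x : Fin n → ℝ) :
    ‖emb (M *ᵥ x)‖ ≤ ‖M‖ * ‖emb x‖ :=
  M.l2_opNorm_mulVec (emb x)

lemma pyth {n m p : ℕ} (A : Matrix (Fin m) (Fin n) ℝ) (C : Matrix (Fin p) (Fin n) ℝ)
    (h : Aᵀ * A + Cᵀ * C = 1) (x : Fin n → ℝ) :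
    ‖emb (A *ᵥ x)‖ ^ 2 + ‖emb (C *ᵥ x)‖ ^ 2 = ‖emb x‖ ^ 2 := by
  have key : ∀ {q : ℕ} (M : Matrix (Fin q) (Fin n) ℝ),
      ‖emb (M *ᵥ x)‖ ^ 2 = x ⬝ᵥ ((Mᵀ * M) *ᵥ x) := by
    intro q M
    rw [← real_inner_self_eq_norm_sq, inner_emb, ← Matrix.mulVec_mulVec,
      Matrix.dotProduct_mulVec]
    rw [show (M *ᵥ x) ᵥ* M = Mᵀ *ᵥ (M *ᵥ x) from (Matrix.mulVec_transpose M _).symm]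
    rw [Matrix.mulVec_mulVec]
    exact dotProduct_comm _ _
  have hx : x ⬝ᵥ ((Aᵀ * A + Cᵀ * C) *ᵥ x) = x ⬝ᵥ x := by rw [h, Matrix.one_mulVec]
  rw [Matrix.add_mulVec, dotProduct_add] at hx
  rw [key A, key C, ← real_inner_self_eq_norm_sq, inner_emb, hx]

lemma norm_mulVec_eq {m n : ℕ} {M : Matrix (Fin m) (Fin n) ℝ} (h : Mᵀ * M = 1)
    (x : Fin n → ℝ) : ‖emb (M *ᵥ x)‖ = ‖emb x‖ := by
  have := pyth M (0 : Matrix (Fin 0) (Fin n) ℝ) (by simpa using h) x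
  simp only [Matrix.zero_mulVec] at this
  have h0 : ‖emb (0 : Fin 0 → ℝ)‖ = 0 := by
    rw [norm_eq_zero]; rfl
  rw [h0] at this
  nlinarith [norm_nonneg (emb (M *ᵥ x)), norm_nonneg (emb x)]

lemma opNorm_le_one {m n : ℕ} {M : Matrix (Fin m) (Fin n) ℝ} (h : Mᵀ * M = 1) : ‖M‖ ≤ 1 :=
  opNorm_le_of_forall M zero_le_one fun x => by rw [norm_mulVec_eq h, one_mul]

lemma conjTranspose_eq {m n : ℕ} (M : Matrix (Fin m) (Fin n) ℝ) : Mᴴ = Mᵀ := by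
  ext i j; simp [Matrix.conjTranspose_apply]

lemma opNorm_transpose {m n : ℕ} (M : Matrix (Fin m) (Fin n) ℝ) : ‖Mᵀ‖ = ‖M‖ := by
  rw [← Matrix.l2_opNorm_conjTranspose M, conjTranspose_eq]

lemma my_le_of_sq_le_sq {a b : ℝ} (ha : 0 ≤ a) (hb : 0 ≤ b) (h : a ^ 2 ≤ b ^ 2) : a ≤ b := by
  nlinarith

lemma emb_eq_zero {n : ℕ} {v : Fin n → ℝ} (h : emb v = 0) : v = 0 := by
  have := congrArg (WithLp.equiv 2 (Fin n → ℝ)) h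
  simpa [emb] using this

lemma key {k l : ℕ} (hk : 0 < k) (A : Matrix (Fin k) (Fin k) ℝ)
    (B : Matrix (Fin k) (Fin l) ℝ) (C : Matrix (Fin l) (Fin k) ℝ)
    (h1 : Aᵀ * A + Cᵀ * C = 1) (h2 : A * Aᵀ + B * Bᵀ = 1) : ‖C‖ ≤ ‖B‖ := by
  classical
  set T : EuclideanSpace ℝ (Fin k) →L[ℝ] EuclideanSpace ℝ (Fin k) :=
    Matrix.toEuclideanCLM (𝕜 := ℝ) (Aᵀ * A) with hT
  have hstar : star (Aᵀ * A) = Aᵀ * A := by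
    rw [Matrix.star_eq_conjTranspose, conjTranspose_eq, Matrix.transpose_mul,
      Matrix.transpose_transpose]
  have hTsa : IsSelfAdjoint T := by
    show star T = T
    rw [hT, ← map_star, hstar]
  have hTapp : ∀ v : Fin k → ℝ, T (emb v) = emb ((Aᵀ * A) *ᵥ v) := by
    intro v
    rw [hT]
    show Matrix.toEuclideanCLM (𝕜 := ℝ) (Aᵀ * A) ((WithLp.equiv 2 _).symm v) = _
    exact Matrix.toEuclideanCLM_toLp _ _
  have hray : ∀ v : Fin k → ℝ, T.reApplyInnerSelf (emb v) = ‖emb (A *ᵥ v)‖ ^ 2 := by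
    intro v
    rw [ContinuousLinearMap.reApplyInnerSelf, hTapp]
    have : (inner (𝕜 := ℝ) (emb ((Aᵀ * A) *ᵥ v)) (emb v) : ℝ) = ((Aᵀ * A) *ᵥ v) ⬝ᵥ v :=
      inner_emb _ _
    rw [show RCLike.re (inner (𝕜 := ℝ) (emb ((Aᵀ * A) *ᵥ v)) (emb v) : ℝ)
        = ((Aᵀ * A) *ᵥ v) ⬝ᵥ v from this]
    rw [← real_inner_self_eq_norm_sq, inner_emb, ← Matrix.mulVec_mulVec,
      Matrix.dotProduct_mulVec,
      show (A *ᵥ v) ᵥ* A = Aᵀ *ᵥ (A *ᵥ v) from (Matrix.mulVec_transpose A _).symm,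
      Matrix.mulVec_mulVec, dotProduct_comm]
  have hsph : (Metric.sphere (0 : EuclideanSpace ℝ (Fin k)) 1).Nonempty := by
    refine ⟨EuclideanSpace.single ⟨0, hk⟩ (1 : ℝ), ?_⟩
    rw [mem_sphere_zero_iff_norm, EuclideanSpace.norm_single, norm_one]
  obtain ⟨x₀, hx₀S, hmin⟩ := (isCompact_sphere (0 : EuclideanSpace ℝ (Fin k)) 1).exists_isMinOn
    hsph T.reApplyInnerSelf_continuous.continuousOn
  have hx₀n : ‖x₀‖ = 1 := mem_sphere_zero_iff_norm.mp hx₀S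
  have hx₀ne : x₀ ≠ 0 := by
    intro h; rw [h, norm_zero] at hx₀n; norm_num at hx₀n
  have hextr : IsLocalExtrOn T.reApplyInnerSelf (Metric.sphere (0 : EuclideanSpace ℝ (Fin k))
      ‖x₀‖) x₀ := by
    rw [hx₀n]; exact hmin.isExtr.localize
  have heig : T x₀ = T.rayleighQuotient x₀ • x₀ :=
    hTsa.eq_smul_self_of_isLocalExtrOn_real hextr
  set x' : Fin k → ℝ := WithLp.equiv 2 (Fin k → ℝ) x₀ with hx'
  have hx0emb : emb x' = x₀ := (WithLp.equiv 2 (Fin k → ℝ)).symm_apply_apply x₀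
  set s : ℝ := ‖emb (A *ᵥ x')‖ with hs
  have hs0 : 0 ≤ s := norm_nonneg _
  have hrx₀ : T.reApplyInnerSelf x₀ = s ^ 2 := by rw [← hx0emb, hray]
  have hμ : T.rayleighQuotient x₀ = s ^ 2 := by
    rw [ContinuousLinearMap.rayleighQuotient, hrx₀, hx₀n]; norm_num
  have hmin' : ∀ v : Fin k → ℝ, s * ‖emb v‖ ≤ ‖emb (A *ᵥ v)‖ := by
    intro v
    rcases eq_or_ne (emb v) 0 with h0 | h0
    · rw [emb_eq_zero h0, Matrix.mulVec_zero,
        show (emb (0 : Fin k → ℝ)) = 0 from rfl, norm_zero, mul_zero]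
    · have hnv : ‖emb v‖ ≠ 0 := norm_ne_zero_iff.mpr h0
      have hnvpos : 0 < ‖emb v‖ := (norm_nonneg _).lt_of_ne' hnv
      have hmem : emb (‖emb v‖⁻¹ • v) ∈ Metric.sphere (0 : EuclideanSpace ℝ (Fin k)) 1 := by
        rw [mem_sphere_zero_iff_norm, emb_smul, norm_smul, Real.norm_eq_abs,
          abs_of_nonneg (by positivity : (0:ℝ) ≤ ‖emb v‖⁻¹), inv_mul_cancel₀ hnv]
      have hle : s ^ 2 ≤ T.reApplyInnerSelf (emb (‖emb v‖⁻¹ • v)) := by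
        have := hmin hmem
        simpa [hrx₀] using this
      rw [hray, Matrix.mulVec_smul, emb_smul, norm_smul, Real.norm_eq_abs,
        abs_of_nonneg (by positivity : (0:ℝ) ≤ ‖emb v‖⁻¹), mul_pow] at hle
      have h2' := mul_le_mul_of_nonneg_right hle (by positivity : (0:ℝ) ≤ ‖emb v‖ ^ 2)
      rw [mul_assoc, mul_comm (‖emb (A *ᵥ v)‖ ^ 2), ← mul_assoc, inv_pow,
        inv_mul_cancel₀ (by positivity : (‖emb v‖ : ℝ) ^ 2 ≠ 0), one_mul] at h2'
      exact my_le_of_sq_le_sq (mul_nonneg hs0 (norm_nonneg _)) (norm_nonneg _)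
        (by rw [mul_pow]; exact h2')
  have hy : ∃ y : Fin k → ℝ, ‖emb y‖ = 1 ∧ ‖emb (Aᵀ *ᵥ y)‖ ≤ s := by
    rcases eq_or_lt_of_le hs0 with hseq | hspos
    · have hAx : A *ᵥ x' = 0 := emb_eq_zero (norm_eq_zero.mp (by rw [← hs, ← hseq]))
      have hx'ne : x' ≠ 0 := by
        intro h
        exact hx₀ne (by rw [← hx0emb, h]; rfl)
      have hdet : A.det = 0 := Matrix.exists_mulVec_eq_zero_iff.mp ⟨x', hx'ne, hAx⟩
      have hdetT : Aᵀ.det = 0 := by rw [Matrix.det_transpose]; exact hdet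
      obtain ⟨y, hy0, hAy⟩ := Matrix.exists_mulVec_eq_zero_iff.mpr hdetT
      have hny : ‖emb y‖ ≠ 0 := norm_ne_zero_iff.mpr (fun h => hy0 (emb_eq_zero h))
      refine ⟨‖emb y‖⁻¹ • y, ?_, ?_⟩
      · rw [emb_smul, norm_smul, Real.norm_eq_abs,
          abs_of_nonneg (by positivity : (0:ℝ) ≤ ‖emb y‖⁻¹), inv_mul_cancel₀ hny]
      · rw [Matrix.mulVec_smul, hAy, smul_zero, show (emb (0 : Fin k → ℝ)) = 0 from rfl,
          norm_zero]
        exact hs0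
    · have hAAx : (Aᵀ * A) *ᵥ x' = (s ^ 2) • x' := by
        have h2' : T (emb x') = (s ^ 2) • emb x' := by
          rw [hx0emb, heig, hμ]
        rw [hTapp, ← emb_smul] at h2'
        have := congrArg (WithLp.equiv 2 (Fin k → ℝ)) h2'
        simpa [emb] using this
      refine ⟨s⁻¹ • (A *ᵥ x'), ?_, ?_⟩
      · rw [emb_smul, norm_smul, Real.norm_eq_abs,
          abs_of_nonneg (by positivity : (0:ℝ) ≤ s⁻¹), ← hs, inv_mul_cancel₀ (ne_of_gt hspos)]
      · rw [Matrix.mulVec_smul, Matrix.mulVec_mulVec, hAAx, smul_smul, emb_smul, norm_smul,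
          Real.norm_eq_abs]
        have hx'n : ‖emb x'‖ = 1 := by rw [hx0emb, hx₀n]
        rw [hx'n, mul_one, abs_of_nonneg (by positivity : (0:ℝ) ≤ s⁻¹ * s ^ 2)]
        rw [pow_two, ← mul_assoc, inv_mul_cancel₀ (ne_of_gt hspos), one_mul]
  obtain ⟨y, hy1, hy2⟩ := hy
  have hs1 : s ^ 2 ≤ 1 := by
    have hp := pyth A C h1 x'
    rw [hx0emb, hx₀n] at hp
    nlinarith [norm_nonneg (emb (C *ᵥ x'))]
  have hCb : ‖C‖ ≤ Real.sqrt (1 - s ^ 2) := by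
    apply opNorm_le_of_forall C (Real.sqrt_nonneg _)
    intro v
    have hp := pyth A C h1 v
    have hAv := hmin' v
    apply my_le_of_sq_le_sq (norm_nonneg _) (by positivity)
    rw [mul_pow, Real.sq_sqrt (by linarith : (0:ℝ) ≤ 1 - s ^ 2)]
    have hsq := mul_self_le_mul_self (mul_nonneg hs0 (norm_nonneg _)) hAv
    nlinarith [hsq, hp]
  have hBb : Real.sqrt (1 - s ^ 2) ≤ ‖B‖ := by
    have hp := pyth Aᵀ Bᵀ (by simpa [Matrix.transpose_transpose] using h2) y
    rw [hy1, one_pow] at hp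
    have h3 : 1 - s ^ 2 ≤ ‖emb (Bᵀ *ᵥ y)‖ ^ 2 := by
      nlinarith [hy2, hs0, norm_nonneg (emb (Aᵀ *ᵥ y))]
    have h4 : ‖emb (Bᵀ *ᵥ y)‖ ≤ ‖Bᵀ‖ := by
      have := norm_mulVec_le Bᵀ y
      rwa [hy1, mul_one] at this
    calc Real.sqrt (1 - s ^ 2) ≤ Real.sqrt (‖emb (Bᵀ *ᵥ y)‖ ^ 2) := Real.sqrt_le_sqrt h3
      _ = ‖emb (Bᵀ *ᵥ y)‖ := Real.sqrt_sq (norm_nonneg _)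
      _ ≤ ‖Bᵀ‖ := h4
      _ = ‖B‖ := opNorm_transpose B
  linarith


lemma submatrix_transpose_mul {n m p q : ℕ} (X Y : Matrix (Fin n) (Fin m) ℝ)
    (f : Fin p → Fin m) (g : Fin q → Fin m) :
    (X.submatrix id f)ᵀ * (Y.submatrix id g) = (Xᵀ * Y).submatrix f g := by
  ext i j; simp [Matrix.mul_apply]

lemma mul_submatrix {n m q p : ℕ} (X : Matrix (Fin n) (Fin m) ℝ) (Y : Matrix (Fin m) (Fin q) ℝ)
    (f : Fin p → Fin q) :
    X * Y.submatrix id f = (X * Y).submatrix id f := by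
  ext i j; simp [Matrix.mul_apply]

lemma split_mul_transpose {n k l : ℕ} (X Y : Matrix (Fin n) (Fin (k + l)) ℝ) :
    X * Yᵀ = X.submatrix id (Fin.castAdd l) * (Y.submatrix id (Fin.castAdd l))ᵀ
      + X.submatrix id (Fin.natAdd k) * (Y.submatrix id (Fin.natAdd k))ᵀ := by
  ext i j; simp [Matrix.mul_apply, Fin.sum_univ_add]

lemma one_cc {k l : ℕ} :
    (1 : Matrix (Fin (k + l)) (Fin (k + l)) ℝ).submatrix (Fin.castAdd l) (Fin.castAdd l) = 1 := by
  ext i j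
  by_cases h : i = j
  · simp [h, Matrix.one_apply]
  · have hne : (Fin.castAdd l i) ≠ (Fin.castAdd l j) := by
      simp [Fin.ext_iff] at h ⊢; omega
    simp [Matrix.one_apply, h, hne]

lemma one_nn {k l : ℕ} :
    (1 : Matrix (Fin (k + l)) (Fin (k + l)) ℝ).submatrix (Fin.natAdd k) (Fin.natAdd k) = 1 := by
  ext i j
  by_cases h : i = j
  · simp [h, Matrix.one_apply]
  · have hne : (Fin.natAdd k i) ≠ (Fin.natAdd k j) := by
      simp [Fin.ext_iff] at h ⊢; omega
    simp [Matrix.one_apply, h, hne]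

lemma one_cn {k l : ℕ} :
    (1 : Matrix (Fin (k + l)) (Fin (k + l)) ℝ).submatrix (Fin.castAdd l) (Fin.natAdd k) = 0 := by
  ext i j
  have hne : (Fin.castAdd l i) ≠ (Fin.natAdd k j) := by
    simp [Fin.ext_iff]; omega
  simp [Matrix.one_apply, hne]

lemma one_nc {k l : ℕ} :
    (1 : Matrix (Fin (k + l)) (Fin (k + l)) ℝ).submatrix (Fin.natAdd k) (Fin.castAdd l) = 0 := by
  ext i j
  have hne : (Fin.natAdd k i) ≠ (Fin.castAdd l j) := by
    simp [Fin.ext_iff]; omega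
  simp [Matrix.one_apply, hne]

lemma submatrix_mul_diagonal {m n p : ℕ} (X : Matrix (Fin m) (Fin n) ℝ) (d : Fin n → ℝ)
    (f : Fin p → Fin n) :
    (X * Matrix.diagonal d).submatrix id f = X.submatrix id f * Matrix.diagonal (fun j => d (f j)) := by
  ext i j
  simp [Matrix.mul_diagonal]

end Stmt10Aux

set_option maxHeartbeats 2000000 in
open Stmt10Aux in
/-- Operator difference bound:
`‖K_TSVD − K̂_TSVD‖₂ ≤ ‖K‖₂ ‖V_kᵀ V̂₀‖₂ + ‖Ŵ₂₁‖₂` where `K_TSVD = U_k Σ_k V_kᵀ`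
and `K̂_TSVD = Û_k Σ̂_t V̂_kᵀ`. -/
theorem stmt10 (k l : ℕ) (hk : 0 < k)
    (K U V Uh Vh : Matrix (Fin (k + l)) (Fin (k + l)) ℝ)
    (σ : Fin (k + l) → ℝ)
    (St : Matrix (Fin k) (Fin k) ℝ) (W12 : Matrix (Fin k) (Fin l) ℝ)
    (W21 : Matrix (Fin l) (Fin k) ℝ) (S0 W22 : Matrix (Fin l) (Fin l) ℝ)
    (hU : Uᵀ * U = 1) (hU' : U * Uᵀ = 1) (hV : Vᵀ * V = 1) (hV' : V * Vᵀ = 1)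
    (hUh : Uhᵀ * Uh = 1) (hUh' : Uh * Uhᵀ = 1) (hVh : Vhᵀ * Vh = 1) (hVh' : Vh * Vhᵀ = 1)
    (hσdec : Antitone σ) (hσnn : ∀ i, 0 ≤ σ i)
    (hσk : 0 < σ ⟨k - 1, by omega⟩)
    (hSt : St.IsDiag) (hS0 : S0.IsDiag)
    (hK : K = U * Matrix.diagonal σ * Vᵀ)
    (hKh : K = Uh * (Matrix.fromBlocks St W12 W21 (S0 + W22)).submatrix
        finSumFinEquiv.symm finSumFinEquiv.symm * Vhᵀ) :
    ‖U.submatrix id (Fin.castAdd l) * (Matrix.diagonal fun j : Fin k => σ (Fin.castAdd l j)) *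
          (V.submatrix id (Fin.castAdd l))ᵀ -
        Uh.submatrix id (Fin.castAdd l) * St * (Vh.submatrix id (Fin.castAdd l))ᵀ‖ ≤
      ‖K‖ * ‖(V.submatrix id (Fin.castAdd l))ᵀ * Vh.submatrix id (Fin.natAdd k)‖ + ‖W21‖ := by
  classical
  set M : Matrix (Fin (k + l)) (Fin (k + l)) ℝ :=
    (Matrix.fromBlocks St W12 W21 (S0 + W22)).submatrix finSumFinEquiv.symm finSumFinEquiv.symm
    with hM
  set Uk := U.submatrix id (Fin.castAdd l) with hUk
  set Vk := V.submatrix id (Fin.castAdd l) with hVk2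
  set V0 := V.submatrix id (Fin.natAdd k) with hV02
  set Uhk := Uh.submatrix id (Fin.castAdd l) with hUhk2
  set Uh0 := Uh.submatrix id (Fin.natAdd k) with hUh02
  set Vhk := Vh.submatrix id (Fin.castAdd l) with hVhk2
  set Vh0 := Vh.submatrix id (Fin.natAdd k) with hVh02
  -- Gram identities
  have hVkVk : Vkᵀ * Vk = 1 := by
    rw [hVk2, submatrix_transpose_mul, hV, one_cc]
  have hV0V0 : V0ᵀ * V0 = 1 := by
    rw [hV02, submatrix_transpose_mul, hV, one_nn]
  have hV0Vk : V0ᵀ * Vk = 0 := by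
    rw [hV02, hVk2, submatrix_transpose_mul, hV, one_nc]
  have hVhkVhk : Vhkᵀ * Vhk = 1 := by
    rw [hVhk2, submatrix_transpose_mul, hVh, one_cc]
  have hVh0Vh0 : Vh0ᵀ * Vh0 = 1 := by
    rw [hVh02, submatrix_transpose_mul, hVh, one_nn]
  have hUh0Uh0 : Uh0ᵀ * Uh0 = 1 := by
    rw [hUh02, submatrix_transpose_mul, hUh, one_nn]
  -- splits of the identity
  have hsplitV : Vk * Vkᵀ + V0 * V0ᵀ = 1 := by
    rw [hVk2, hV02, ← split_mul_transpose]; exact hV'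
  have hsplitVh : Vhk * Vhkᵀ + Vh0 * Vh0ᵀ = 1 := by
    rw [hVhk2, hVh02, ← split_mul_transpose]; exact hVh'
  -- products with K
  have hKV : K * V = U * Matrix.diagonal σ := by
    rw [hK, mul_assoc, hV, mul_one]
  have hKVk : K * Vk = Uk * Matrix.diagonal (fun j : Fin k => σ (Fin.castAdd l j)) := by
    rw [hVk2, mul_submatrix, hKV, submatrix_mul_diagonal, hUk]
  have hKVh : K * Vh = Uh * M := by
    rw [hKh, mul_assoc, hVh, mul_one]
  have hKVhk : K * Vhk = Uhk * St + Uh0 * W21 := by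
    rw [hVhk2, mul_submatrix, hKVh]
    ext i j
    simp [hM, hUhk2, hUh02, Matrix.mul_apply, Fin.sum_univ_add]
  -- rewrite goal matrices
  have e1 : Uk * Matrix.diagonal (fun j : Fin k => σ (Fin.castAdd l j)) * Vkᵀ
      = K * Vk * Vkᵀ := by rw [hKVk]
  have e2 : Uhk * St * Vhkᵀ = K * Vhk * Vhkᵀ - Uh0 * W21 * Vhkᵀ := by
    rw [hKVhk, Matrix.add_mul]; abel
  -- projector difference identity
  have hmat : Vk * Vkᵀ - Vhk * Vhkᵀ
      = Vk * (Vkᵀ * Vh0) * Vh0ᵀ - V0 * (V0ᵀ * Vhk) * Vhkᵀ := by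
    have expand : Vk * Vkᵀ - Vhk * Vhkᵀ
        = Vk * Vkᵀ * (Vhk * Vhkᵀ + Vh0 * Vh0ᵀ) - (Vk * Vkᵀ + V0 * V0ᵀ) * (Vhk * Vhkᵀ) := by
      rw [hsplitVh, hsplitV, mul_one, one_mul]
    rw [expand, Matrix.mul_add, Matrix.add_mul]
    simp only [Matrix.mul_assoc]
    abel
  set a := ‖Vkᵀ * Vh0‖ with ha
  have ha0 : 0 ≤ a := norm_nonneg _
  -- key inequality between the off-diagonal blocks
  have hb_le_a : ‖V0ᵀ * Vhk‖ ≤ a := by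
    apply key hk (Vkᵀ * Vhk) (Vkᵀ * Vh0) (V0ᵀ * Vhk)
    · rw [Matrix.transpose_mul, Matrix.transpose_transpose, Matrix.transpose_mul,
        Matrix.transpose_transpose]
      calc Vhkᵀ * Vk * (Vkᵀ * Vhk) + Vhkᵀ * V0 * (V0ᵀ * Vhk)
          = Vhkᵀ * ((Vk * Vkᵀ + V0 * V0ᵀ) * Vhk) := by
            rw [Matrix.add_mul, Matrix.mul_add]; simp only [Matrix.mul_assoc]
        _ = 1 := by rw [hsplitV, Matrix.one_mul, hVhkVhk]
    · rw [Matrix.transpose_mul, Matrix.transpose_transpose, Matrix.transpose_mul,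
        Matrix.transpose_transpose]
      calc Vkᵀ * Vhk * (Vhkᵀ * Vk) + Vkᵀ * Vh0 * (Vh0ᵀ * Vk)
          = Vkᵀ * ((Vhk * Vhkᵀ + Vh0 * Vh0ᵀ) * Vk) := by
            rw [Matrix.add_mul, Matrix.mul_add]; simp only [Matrix.mul_assoc]
        _ = 1 := by rw [hsplitVh, Matrix.one_mul, hVkVk]
  -- bound on the projector difference
  have hPQ : ‖Vk * Vkᵀ - Vhk * Vhkᵀ‖ ≤ a := by
    apply opNorm_le_of_forall _ ha0
    intro x
    set u := Vhkᵀ *ᵥ x with hu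
    set w := Vh0ᵀ *ᵥ x with hw
    have hxsplit : ‖emb u‖ ^ 2 + ‖emb w‖ ^ 2 = ‖emb x‖ ^ 2 := by
      have := pyth Vhkᵀ Vh0ᵀ
        (by rw [Matrix.transpose_transpose, Matrix.transpose_transpose]; exact hsplitVh) x
      rw [hu, hw]; exact this
    have hdecomp : (Vk * Vkᵀ - Vhk * Vhkᵀ) *ᵥ x
        = Vk *ᵥ ((Vkᵀ * Vh0) *ᵥ w) - V0 *ᵥ ((V0ᵀ * Vhk) *ᵥ u) := by
      rw [hmat, Matrix.sub_mulVec, hw, hu]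
      simp only [← Matrix.mulVec_mulVec]
    have horth : ⟪emb (Vk *ᵥ ((Vkᵀ * Vh0) *ᵥ w)), emb (V0 *ᵥ ((V0ᵀ * Vhk) *ᵥ u))⟫ = 0 := by
      rw [inner_emb, Matrix.dotProduct_mulVec,
        show (Vk *ᵥ ((Vkᵀ * Vh0) *ᵥ w)) ᵥ* V0 = V0ᵀ *ᵥ (Vk *ᵥ ((Vkᵀ * Vh0) *ᵥ w)) from
          (Matrix.mulVec_transpose V0 _).symm,
        Matrix.mulVec_mulVec, hV0Vk, Matrix.zero_mulVec, zero_dotProduct]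
    have h1n : ‖emb (Vk *ᵥ ((Vkᵀ * Vh0) *ᵥ w))‖ ≤ a * ‖emb w‖ := by
      rw [norm_mulVec_eq hVkVk]
      exact norm_mulVec_le _ w
    have h2n : ‖emb (V0 *ᵥ ((V0ᵀ * Vhk) *ᵥ u))‖ ≤ a * ‖emb u‖ := by
      rw [norm_mulVec_eq hV0V0]
      exact le_trans (norm_mulVec_le _ u)
        (mul_le_mul_of_nonneg_right hb_le_a (norm_nonneg _))
    rw [hdecomp, emb_sub]
    apply my_le_of_sq_le_sq (norm_nonneg _) (mul_nonneg ha0 (norm_nonneg _))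
    rw [norm_sub_sq_real, horth]
    have s1 := mul_self_le_mul_self (norm_nonneg _) h1n
    have s2 := mul_self_le_mul_self (norm_nonneg _) h2n
    have hx2 : (a * ‖emb x‖) ^ 2 = a * ‖emb w‖ * (a * ‖emb w‖) + a * ‖emb u‖ * (a * ‖emb u‖) := by
      have : ‖emb x‖ ^ 2 = ‖emb u‖ ^ 2 + ‖emb w‖ ^ 2 := hxsplit.symm
      rw [mul_pow, this]; ring
    rw [hx2]
    nlinarith [s1, s2]
  -- assemble
  rw [e1, e2]
  have hD : K * Vk * Vkᵀ - (K * Vhk * Vhkᵀ - Uh0 * W21 * Vhkᵀ)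
      = K * (Vk * Vkᵀ - Vhk * Vhkᵀ) + Uh0 * (W21 * Vhkᵀ) := by
    rw [Matrix.mul_sub]
    simp only [Matrix.mul_assoc]
    abel
  rw [hD]
  have hnUh0 : ‖Uh0‖ ≤ 1 := opNorm_le_one hUh0Uh0
  have hnVhkT : ‖Vhkᵀ‖ ≤ 1 := by
    rw [opNorm_transpose]; exact opNorm_le_one hVhkVhk
  have hterm1 : ‖K * (Vk * Vkᵀ - Vhk * Vhkᵀ)‖ ≤ ‖K‖ * a :=
    le_trans (Matrix.l2_opNorm_mul _ _) (mul_le_mul_of_nonneg_left hPQ (norm_nonneg K))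
  have hterm2 : ‖Uh0 * (W21 * Vhkᵀ)‖ ≤ ‖W21‖ := by
    calc ‖Uh0 * (W21 * Vhkᵀ)‖ ≤ ‖Uh0‖ * ‖W21 * Vhkᵀ‖ := Matrix.l2_opNorm_mul _ _
      _ ≤ 1 * (‖W21‖ * ‖Vhkᵀ‖) := by
          apply mul_le_mul hnUh0 (Matrix.l2_opNorm_mul _ _) (norm_nonneg _) zero_le_one
      _ ≤ ‖W21‖ := by nlinarith [norm_nonneg W21, norm_nonneg Vhkᵀ, hnVhkT]
  calc ‖K * (Vk * Vkᵀ - Vhk * Vhkᵀ) + Uh0 * (W21 * Vhkᵀ)‖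
      ≤ ‖K * (Vk * Vkᵀ - Vhk * Vhkᵀ)‖ + ‖Uh0 * (W21 * Vhkᵀ)‖ := norm_add_le _ _
    _ ≤ ‖K‖ * a + ‖W21‖ := add_le_add hterm1 hterm2
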